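/- For all real parameters η > 0 and φ > 0, the PCD probability mass function sums to one: ∑_{x=0}^∞ (η² / ((φ+η)(1+η)^{x+4}))·[(1+η)³ + (φη²/6)(x+1)(x+2)(x+3)] = 1. -/

import Mathlib

lemma pcd_choose_cast (x : ℕ) :
    (((x + 3).choose 3 : ℕ) : ℝ) = ((x : ℝ) + 1) * ((x : ℝ) + 2) * ((x : ℝ) + 3) / 6 := by
  have h : 6 * (x + 3).choose 3 = (x + 1) * ((x + 2) * (x + 3)) := by
    have := Nat.descFactorial_eq_factorial_mul_choose (x + 3) 3
    simp [Nat.descFactorial, Nat.factorial] at this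
    omega
  have := congrArg (fun n : ℕ => (n : ℝ)) h
  push_cast at this
  linarith

/-- The PCD pmf sums to one. -/
theorem pcd_pmf_sums_to_one (η φ : ℝ) (hη : 0 < η) (hφ : 0 < φ) :
    ∑' x : ℕ, (η ^ 2 / ((φ + η) * (1 + η) ^ (x + 4)))
        * ((1 + η) ^ 3
          + (φ * η ^ 2 / 6) * ((x : ℝ) + 1) * ((x : ℝ) + 2) * ((x : ℝ) + 3)) = 1 := by
  have ha : (0 : ℝ) < 1 + η := by linarith
  have ha' : (1 : ℝ) + η ≠ 0 := ne_of_gt ha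
  have hfη : φ + η ≠ 0 := by positivity
  set r : ℝ := (1 + η)⁻¹ with hr_def
  have hr : ‖r‖ < 1 := by
    rw [Real.norm_eq_abs, abs_of_pos (by positivity)]
    rw [inv_lt_one_iff₀]
    right; linarith
  have h1 : HasSum (fun x : ℕ => r ^ x) (1 - r)⁻¹ := hasSum_geometric_of_norm_lt_one hr
  have h2 : HasSum (fun x : ℕ => (((x + 3).choose 3 : ℕ) : ℝ) * r ^ x) (1 / (1 - r) ^ 4) :=
    hasSum_choose_mul_geometric_of_norm_lt_one 3 hr
  set c1 : ℝ := η ^ 2 / ((φ + η) * (1 + η)) with hc1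
  set c2 : ℝ := φ * η ^ 4 / ((φ + η) * (1 + η) ^ 4) with hc2
  have hs := (h1.mul_left c1).add (h2.mul_left c2)
  have h1mr : 1 - r = η / (1 + η) := by
    rw [hr_def]; field_simp; ring
  have hval : c1 * (1 - r)⁻¹ + c2 * (1 / (1 - r) ^ 4) = 1 := by
    rw [h1mr, hc1, hc2]
    have hη' : η ≠ 0 := ne_of_gt hη
    field_simp
    ring
  have hfun : ∀ x : ℕ,
      (η ^ 2 / ((φ + η) * (1 + η) ^ (x + 4)))
        * ((1 + η) ^ 3
          + (φ * η ^ 2 / 6) * ((x : ℝ) + 1) * ((x : ℝ) + 2) * ((x : ℝ) + 3))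
      = c1 * r ^ x + c2 * ((((x + 3).choose 3 : ℕ) : ℝ) * r ^ x) := by
    intro x
    rw [pcd_choose_cast x, pow_add, hr_def, inv_pow, hc1, hc2]
    have hpx : (1 + η) ^ x ≠ 0 := pow_ne_zero _ ha'
    field_simp
  rw [tsum_congr hfun]
  rw [hs.tsum_eq, hval]
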